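/- Let r > 0, let ℓ ≥ 1, let K = {a₀ < a₁ < … < a_{ℓ−1}} be a set of ℓ nonnegative integers, and let b ∈ {0, 1, …, ℓ}. Let M be the ℓ × ℓ real matrix whose rows are indexed by the elements of K in increasing order and whose columns are indexed by the elements of {0, …, ℓ} \ {b} in increasing order, with entry in row s ∈ K and column t given by (W_r)_{s,t}. Then det M = e^{−ℓr²/8} · (−1)^{Σ_K} · √(b! / (F_{[ℓ+1]} · F_K)) · (r/√2)^{Σ_K − ℓ(ℓ+1)/2 + b} · C_K · Γ_{K,b}, where the power of r/√2 is an integer power (possibly negative). In particular, for b = ℓ: the ℓ × ℓ matrix with rows K and columns {0,…,ℓ−1} has determinant e^{−ℓr²/8} · (−1)^{Σ_K} · √(1/(F_{[ℓ]} F_K)) · (r/√2)^{Σ_K − ℓ(ℓ−1)/2} · C_K. -/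

import Mathlib

open Real

/-- `(W_r)_{s,t} = e^{−r²/8} (−1)^s √(t!/s!) binom(s,t) (r/√2)^{s−t}` for `s ≥ t`, and `0` otherwise. -/
noncomputable def W (r : ℝ) (s t : ℕ) : ℝ :=
  if t ≤ s then
    Real.exp (-r^2 / 8) * (-1)^s * Real.sqrt ((Nat.factorial t : ℝ) / (Nat.factorial s : ℝ)) *
      (Nat.choose s t : ℝ) * (r / Real.sqrt 2)^(s - t)
  else 0

/-- `Γ_{K,b}` for the set `K` enumerated by `a`. -/
noncomputable def Gam {ℓ : ℕ} (a : Fin ℓ → ℕ) (b : ℕ) : ℝ :=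
  (1 / (Nat.factorial b : ℝ)) *
    ∑ d ∈ Finset.range (b+1),
      (-1:ℝ)^d * (Nat.choose b d : ℝ) * ∏ c, ((a c : ℝ) - (d : ℝ))

/-- `C_K = ∏_{c₂ < c₁} (a_{c₁} − a_{c₂})`. -/
noncomputable def CK {ℓ : ℕ} (a : Fin ℓ → ℕ) : ℝ :=
  ∏ c₁, ∏ c₂ ∈ Finset.univ.filter (· < c₁), ((a c₁ : ℝ) - (a c₂ : ℝ))

/-- `F_K = ∏_c (a_c)!`. -/
noncomputable def FK {ℓ : ℕ} (a : Fin ℓ → ℕ) : ℝ := ∏ c, (Nat.factorial (a c) : ℝ)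

/-- `F_{[ℓ]} = ∏_{c=0}^{ℓ−1} c!`. -/
noncomputable def Fl (ℓ : ℕ) : ℝ := ∏ c ∈ Finset.range ℓ, (Nat.factorial c : ℝ)

open Finset Polynomial

lemma sqrt_prod' {ι : Type*} (s : Finset ι) (f : ι → ℝ) (h : ∀ i ∈ s, 0 ≤ f i) :
    Real.sqrt (∏ i ∈ s, f i) = ∏ i ∈ s, Real.sqrt (f i) := by
  classical
  induction s using Finset.induction_on with
  | empty => simp
  | insert a s hx ih =>
    rw [Finset.prod_insert hx, Finset.prod_insert hx,
      Real.sqrt_mul (h a (Finset.mem_insert_self a s)),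
      ih (fun i hi => h i (Finset.mem_insert_of_mem hi))]

lemma fd (b j : ℕ) :
    ∑ d ∈ Finset.range (b+1), (-1:ℝ)^d * (b.choose d : ℝ) * (d.descFactorial j : ℝ)
      = (-1:ℝ)^b * (if j = b then (b.factorial : ℝ) else 0) := by
  rcases lt_or_ge b j with hbj | hjb
  · rw [if_neg (by omega), mul_zero]
    apply Finset.sum_eq_zero
    intro d hd
    have hd' : d < j := by simp only [Finset.mem_range] at hd; omega
    have : d.descFactorial j = 0 := Nat.descFactorial_eq_zero_iff_lt.2 hd'
    simp [this]
  · have h1 : ∑ d ∈ Finset.range (b+1), (-1:ℝ)^d * (b.choose d : ℝ) * (d.descFactorial j : ℝ)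
        = ∑ d ∈ Finset.Ico j (b+1), (-1:ℝ)^d * (b.choose d : ℝ) * (d.descFactorial j : ℝ) := by
      rw [Finset.range_eq_Ico]
      symm
      apply Finset.sum_subset (Finset.Ico_subset_Ico (Nat.zero_le _) le_rfl)
      intro x hx hnx
      have : x < j := by
        simp only [Finset.mem_Ico] at hx hnx; omega
      simp [Nat.descFactorial_eq_zero_iff_lt.2 this]
    rw [h1, Finset.sum_Ico_eq_sum_range]
    have h2 : b + 1 - j = (b - j) + 1 := by omega
    rw [h2]
    have h3 : ∀ e ∈ Finset.range (b - j + 1),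
        (-1:ℝ)^(j+e) * (b.choose (j+e) : ℝ) * ((j+e).descFactorial j : ℝ)
          = ((-1:ℝ)^j * (j.factorial : ℝ) * (b.choose j : ℝ)) * ((-1:ℝ)^e * ((b-j).choose e : ℝ)) := by
      intro e he
      simp only [Finset.mem_range] at he
      have h4 : (j+e).descFactorial j = j.factorial * (j+e).choose j :=
        Nat.descFactorial_eq_factorial_mul_choose _ _
      have h5 : b.choose (j+e) * (j+e).choose j = b.choose j * ((b-j).choose e) := by
        have := Nat.choose_mul (n := b) (show j ≤ j+e by omega)
        simpa using this
      have h5' : (b.choose (j+e) : ℝ) * ((j+e).choose j : ℝ)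
          = (b.choose j : ℝ) * ((b-j).choose e : ℝ) := by exact_mod_cast h5
      rw [h4, pow_add]
      push_cast
      linear_combination ((-1:ℝ)^j * (-1:ℝ)^e * (j.factorial : ℝ)) * h5'
    rw [Finset.sum_congr rfl h3, ← Finset.mul_sum]
    have h6 : ∑ e ∈ Finset.range (b-j+1), (-1:ℝ)^e * ((b-j).choose e : ℝ)
        = if b - j = 0 then 1 else 0 := by
      have h7 := Int.alternating_sum_range_choose (n := b - j)
      have h8 := congrArg (fun z : ℤ => (z : ℝ)) h7
      push_cast at h8
      rw [h8]
    rw [h6]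
    rcases eq_or_lt_of_le hjb with h | h
    · subst h
      simp [Nat.choose_self]
    · rw [if_neg (by omega), if_neg (by omega)]
      simp

lemma vand_swap {ℓ : ℕ} (f : Fin ℓ → Fin ℓ → ℝ) :
    ∏ i, ∏ j ∈ Finset.Ioi i, f i j
      = ∏ j, ∏ i ∈ Finset.univ.filter (· < j), f i j := by
  apply Finset.prod_comm'
  intro x y
  simp

lemma vand_eq_CK {ℓ : ℕ} (a : Fin ℓ → ℕ) :
    ∏ i, ∏ j ∈ Finset.Ioi i, ((a j : ℝ) - (a i : ℝ)) = CK a := by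
  rw [vand_swap]; rfl

lemma succAbove_val {ℓ : ℕ} (p : Fin (ℓ+1)) (t : Fin ℓ) :
    ((p.succAbove t : Fin (ℓ+1)) : ℕ) = if (t:ℕ) < (p:ℕ) then (t:ℕ) else (t:ℕ)+1 := by
  rw [Fin.succAbove]
  split
  · rename_i h
    rw [if_pos]
    · rfl
    · exact h
  · rename_i h
    rw [if_neg]
    · rfl
    · exact h

lemma Ioi_prod_eq {ℓ : ℕ} (x : Fin ℓ) (g : Fin ℓ → ℝ) :
    ∏ j ∈ Finset.Ioi x, g j = ∏ j, if x < j then g j else 1 := by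
  rw [← Finset.prod_filter]
  congr 1
  ext y
  simp

lemma vand_snoc {ℓ : ℕ} (w : Fin ℓ → ℝ) (d : ℝ) :
    (∏ i : Fin (ℓ+1), ∏ j ∈ Finset.Ioi i, ((Fin.snoc w d : Fin (ℓ+1) → ℝ) j - (Fin.snoc w d : Fin (ℓ+1) → ℝ) i))
      = (∏ i, ∏ j ∈ Finset.Ioi i, (w j - w i)) * ∏ c, (d - w c) := by
  rw [Fin.prod_univ_castSucc]
  have hlast : ∏ j ∈ Finset.Ioi (Fin.last ℓ), ((Fin.snoc w d : Fin (ℓ+1) → ℝ) j - (Fin.snoc w d : Fin (ℓ+1) → ℝ) (Fin.last ℓ)) = 1 := by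
    rw [Ioi_prod_eq]
    apply Finset.prod_eq_one
    intro j _
    rw [if_neg (by simp [Fin.lt_def]; omega)]
  rw [hlast, mul_one]
  have hmain : ∀ i' : Fin ℓ,
      (∏ j ∈ Finset.Ioi (Fin.castSucc i'), ((Fin.snoc w d : Fin (ℓ+1) → ℝ) j - (Fin.snoc w d : Fin (ℓ+1) → ℝ) (Fin.castSucc i')))
        = (∏ j ∈ Finset.Ioi i', (w j - w i')) * (d - w i') := by
    intro i'
    rw [Ioi_prod_eq, Fin.prod_univ_castSucc]
    congr 1
    · rw [Ioi_prod_eq]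
      apply Finset.prod_congr rfl
      intro j _
      simp only [Fin.castSucc_lt_castSucc_iff, Fin.snoc_castSucc]
    · rw [if_pos (Fin.castSucc_lt_last i'), Fin.snoc_last, Fin.snoc_castSucc]
  rw [Finset.prod_congr rfl (fun i' _ => hmain i'), Finset.prod_mul_distrib]

lemma detA {ℓ : ℕ} (a : Fin ℓ → ℕ) (d : ℕ) :
    Matrix.det (Matrix.of fun i j : Fin (ℓ+1) =>
        Polynomial.eval ((Fin.snoc (fun s => (a s : ℝ)) (d:ℝ) : Fin (ℓ+1) → ℝ) i)
          (descPochhammer ℝ (j:ℕ)))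
      = CK a * ∏ c, ((d:ℝ) - (a c : ℝ)) := by
  rw [← Matrix.det_eval_matrixOfPolynomials_eq_det_vandermonde
      (Fin.snoc (fun s => (a s : ℝ)) (d:ℝ)) (fun j => descPochhammer ℝ (j:ℕ))
      (fun i => descPochhammer_natDegree (R := ℝ) (i:ℕ))
      (fun i => monic_descPochhammer ℝ (i:ℕ))]
  rw [Matrix.det_vandermonde]
  rw [vand_snoc, vand_eq_CK]

lemma keyD {ℓ : ℕ} (a : Fin ℓ → ℕ) (p : Fin (ℓ+1)) :
    Matrix.det (Matrix.of fun s t : Fin ℓ => ((a s).descFactorial ((p.succAbove t : Fin (ℓ+1)) : ℕ) : ℝ))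
      = CK a * Gam a (p : ℕ) := by
  set D : Fin (ℓ+1) → ℝ := fun q =>
    Matrix.det (Matrix.of fun s t : Fin ℓ => ((a s).descFactorial ((q.succAbove t : Fin (ℓ+1)) : ℕ) : ℝ)) with hD
  show D p = CK a * Gam a (p : ℕ)
  set b := (p : ℕ) with hbdef
  have expand : ∀ d : ℕ, CK a * ∏ c, ((d:ℝ) - (a c : ℝ))
      = ∑ j : Fin (ℓ+1), (-1:ℝ)^(ℓ + (j:ℕ)) * (d.descFactorial (j:ℕ) : ℝ) * D j := by
    intro d
    rw [← detA a d]
    rw [Matrix.det_succ_row _ (Fin.last ℓ)]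
    apply Finset.sum_congr rfl
    intro j _
    have h1 : (Matrix.of fun i j : Fin (ℓ+1) =>
        Polynomial.eval ((Fin.snoc (fun s => (a s : ℝ)) (d:ℝ) : Fin (ℓ+1) → ℝ) i)
          (descPochhammer ℝ (j:ℕ))) (Fin.last ℓ) j = (d.descFactorial (j:ℕ) : ℝ) := by
      rw [Matrix.of_apply, Fin.snoc_last, descPochhammer_eval_eq_descFactorial]
    have h2 : ((Matrix.of fun i j : Fin (ℓ+1) =>
        Polynomial.eval ((Fin.snoc (fun s => (a s : ℝ)) (d:ℝ) : Fin (ℓ+1) → ℝ) i)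
          (descPochhammer ℝ (j:ℕ))).submatrix (Fin.last ℓ).succAbove j.succAbove)
        = (Matrix.of fun s t : Fin ℓ => ((a s).descFactorial ((j.succAbove t : Fin (ℓ+1)) : ℕ) : ℝ)) := by
      ext s t
      simp only [Matrix.submatrix_apply, Matrix.of_apply, Fin.succAbove_last, Fin.snoc_castSucc]
      rw [descPochhammer_eval_eq_descFactorial]
    rw [h1, h2, Fin.val_last, hD]
  have key : ∑ d ∈ Finset.range (b+1), (-1:ℝ)^d * (b.choose d : ℝ) * (CK a * ∏ c, ((d:ℝ) - (a c : ℝ)))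
      = (-1:ℝ)^(ℓ + b) * ((-1:ℝ)^b * (b.factorial : ℝ)) * D p := by
    calc ∑ d ∈ Finset.range (b+1), (-1:ℝ)^d * (b.choose d : ℝ) * (CK a * ∏ c, ((d:ℝ) - (a c : ℝ)))
        = ∑ d ∈ Finset.range (b+1), ∑ j : Fin (ℓ+1),
            (-1:ℝ)^d * (b.choose d : ℝ) * ((-1:ℝ)^(ℓ + (j:ℕ)) * (d.descFactorial (j:ℕ) : ℝ) * D j) := by
          apply Finset.sum_congr rfl
          intro d _
          rw [expand d, Finset.mul_sum]
      _ = ∑ j : Fin (ℓ+1), (-1:ℝ)^(ℓ + (j:ℕ)) * D j *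
            (∑ d ∈ Finset.range (b+1), (-1:ℝ)^d * (b.choose d : ℝ) * (d.descFactorial (j:ℕ) : ℝ)) := by
          rw [Finset.sum_comm]
          apply Finset.sum_congr rfl
          intro j _
          rw [Finset.mul_sum]
          apply Finset.sum_congr rfl
          intro d _
          ring
      _ = ∑ j : Fin (ℓ+1), (-1:ℝ)^(ℓ + (j:ℕ)) * D j *
            ((-1:ℝ)^b * (if (j:ℕ) = b then (b.factorial : ℝ) else 0)) := by
          apply Finset.sum_congr rfl
          intro j _
          rw [fd b (j:ℕ)]
      _ = (-1:ℝ)^(ℓ + b) * ((-1:ℝ)^b * (b.factorial : ℝ)) * D p := by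
          rw [Finset.sum_eq_single p]
          · rw [if_pos rfl]; ring
          · intro j _ hj
            rw [if_neg (fun h => hj (Fin.ext h))]
            ring
          · intro h
            exact absurd (Finset.mem_univ p) h
  have hsq : (-1:ℝ)^b * (-1:ℝ)^b = 1 := by
    rw [← pow_add, show b + b = 2*b from by ring, pow_mul]
    norm_num
  have hsign : (-1:ℝ)^(ℓ + b) * ((-1:ℝ)^b * (b.factorial : ℝ)) = (-1:ℝ)^ℓ * (b.factorial : ℝ) := by
    rw [pow_add]
    linear_combination ((-1:ℝ)^ℓ * (b.factorial : ℝ)) * hsq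
  have hprod : ∀ d : ℕ, (∏ c, ((d:ℝ) - (a c : ℝ))) = (-1:ℝ)^ℓ * ∏ c, ((a c : ℝ) - (d:ℝ)) := by
    intro d
    have h : ∀ c : Fin ℓ, ((d:ℝ) - (a c : ℝ)) = (-1) * ((a c : ℝ) - (d:ℝ)) := fun c => by ring
    rw [Finset.prod_congr rfl (fun c _ => h c), Finset.prod_mul_distrib,
      Finset.prod_const, Finset.card_univ, Fintype.card_fin]
  have hfac : (0:ℝ) < (b.factorial : ℝ) := by exact_mod_cast Nat.factorial_pos b
  have hs : ((-1:ℝ)^ℓ * (b.factorial : ℝ)) ≠ 0 :=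
    mul_ne_zero (pow_ne_zero _ (by norm_num)) hfac.ne'
  have hsum : ∑ d ∈ Finset.range (b+1), (-1:ℝ)^d * (b.choose d : ℝ) * (CK a * ∏ c, ((d:ℝ) - (a c : ℝ)))
      = (-1:ℝ)^ℓ * CK a * ∑ d ∈ Finset.range (b+1), (-1:ℝ)^d * (b.choose d : ℝ) * ∏ c, ((a c : ℝ) - (d:ℝ)) := by
    rw [Finset.mul_sum]
    apply Finset.sum_congr rfl
    intro d _
    rw [hprod d]
    ring
  rw [hsum, hsign] at key
  apply mul_left_cancel₀ hs
  rw [← key, Gam]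
  have hbne : (b.factorial : ℝ) ≠ 0 := hfac.ne'
  field_simp

lemma W_eq (r : ℝ) (hr : 0 < r) (s t : ℕ) :
    W r s t = (Real.exp (-r^2/8) * (-1:ℝ)^s * (r/Real.sqrt 2)^s / Real.sqrt (s.factorial))
      * (((r/Real.sqrt 2)^t * Real.sqrt (t.factorial))⁻¹ * (s.descFactorial t : ℝ)) := by
  have hx : (0:ℝ) < r / Real.sqrt 2 := div_pos hr (Real.sqrt_pos.2 (by norm_num))
  have hs : (0:ℝ) < Real.sqrt (s.factorial) :=
    Real.sqrt_pos.2 (by exact_mod_cast Nat.factorial_pos s)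
  have ht : (0:ℝ) < Real.sqrt (t.factorial) :=
    Real.sqrt_pos.2 (by exact_mod_cast Nat.factorial_pos t)
  have hsq : Real.sqrt (t.factorial) * Real.sqrt (t.factorial) = (t.factorial : ℝ) :=
    Real.mul_self_sqrt (by positivity)
  rw [W]
  split
  · rename_i h
    have hst : (s.descFactorial t : ℝ) = (t.factorial : ℝ) * (s.choose t : ℝ) := by
      exact_mod_cast Nat.descFactorial_eq_factorial_mul_choose s t
    have hxp : (r/Real.sqrt 2) ^ (s - t) = (r/Real.sqrt 2)^s / (r/Real.sqrt 2)^t :=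
      pow_sub₀ _ hx.ne' h
    have hdiv : Real.sqrt ((t.factorial : ℝ) / (s.factorial : ℝ))
        = Real.sqrt (t.factorial) / Real.sqrt (s.factorial) := Real.sqrt_div (by positivity) _
    rw [hst, hxp, hdiv]
    field_simp
    linear_combination (s.choose t : ℝ) * hsq
  · rename_i h
    have : s.descFactorial t = 0 := Nat.descFactorial_eq_zero_iff_lt.2 (by omega)
    simp [this]

lemma detW {ℓ : ℕ} (r : ℝ) (hr : 0 < r) (a c : Fin ℓ → ℕ) :
    Matrix.det (Matrix.of fun s t : Fin ℓ => W r (a s) (c t))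
      = (∏ s, (Real.exp (-r^2/8) * (-1:ℝ)^(a s) * (r/Real.sqrt 2)^(a s) / Real.sqrt ((a s).factorial)))
        * ((∏ t, ((r/Real.sqrt 2)^(c t) * Real.sqrt ((c t).factorial))⁻¹)
        * Matrix.det (Matrix.of fun s t : Fin ℓ => ((a s).descFactorial (c t) : ℝ))) := by
  have h1 : (Matrix.of fun s t : Fin ℓ => W r (a s) (c t))
      = Matrix.of (fun s t : Fin ℓ =>
          (Real.exp (-r^2/8) * (-1:ℝ)^(a s) * (r/Real.sqrt 2)^(a s) / Real.sqrt ((a s).factorial)) *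
          (Matrix.of (fun s t : Fin ℓ =>
            ((r/Real.sqrt 2)^(c t) * Real.sqrt ((c t).factorial))⁻¹ *
            (Matrix.of fun s t : Fin ℓ => ((a s).descFactorial (c t) : ℝ)) s t) s t)) := by
    ext s t
    simp only [Matrix.of_apply]
    exact W_eq r hr (a s) (c t)
  rw [h1, Matrix.det_mul_column, Matrix.det_mul_row]

lemma assemble (x : ℝ) (hx : 0 < x) (S T : ℕ) (e : ℤ) (he : e = (S:ℤ) - (T:ℤ))
    (F Q Wv : ℝ) (hF : 0 < F) (hQ : 0 < Q) (hW : Wv = (Q * F)⁻¹) (E m C : ℝ) :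
    E * m * x ^ S / Real.sqrt F * ((x ^ T * Real.sqrt Q)⁻¹ * C)
      = E * m * Real.sqrt Wv * x ^ e * C := by
  subst he; subst hW
  rw [Real.sqrt_inv, Real.sqrt_mul hQ.le]
  rw [zpow_sub₀ hx.ne', zpow_natCast, zpow_natCast]
  have h1 : Real.sqrt F ≠ 0 := (Real.sqrt_pos.2 hF).ne'
  have h2 : Real.sqrt Q ≠ 0 := (Real.sqrt_pos.2 hQ).ne'
  have h3 : x ^ T ≠ 0 := pow_ne_zero _ hx.ne'
  field_simp

lemma hrow {ℓ : ℕ} (r : ℝ) (a : Fin ℓ → ℕ) :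
    ∏ s, (Real.exp (-r^2/8) * (-1:ℝ)^(a s) * (r/Real.sqrt 2)^(a s) / Real.sqrt ((a s).factorial))
      = Real.exp (-r^2/8)^ℓ * (-1:ℝ)^(∑ c, a c) * (r/Real.sqrt 2)^(∑ c, a c) / Real.sqrt (FK a) := by
  rw [Finset.prod_div_distrib, Finset.prod_mul_distrib, Finset.prod_mul_distrib,
    Finset.prod_const, Finset.card_univ, Fintype.card_fin,
    Finset.prod_pow_eq_pow_sum, Finset.prod_pow_eq_pow_sum, FK,
    sqrt_prod' Finset.univ (fun s => ((a s).factorial : ℝ)) (fun i _ => by positivity)]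

lemma hcol {ℓ : ℕ} (r : ℝ) (c : Fin ℓ → ℕ) :
    ∏ t, ((r/Real.sqrt 2)^(c t) * Real.sqrt ((c t).factorial))⁻¹
      = ((r/Real.sqrt 2)^(∑ t, c t) * Real.sqrt (∏ t, ((c t).factorial : ℝ)))⁻¹ := by
  rw [Finset.prod_inv_distrib, Finset.prod_mul_distrib, Finset.prod_pow_eq_pow_sum,
    sqrt_prod' Finset.univ (fun t => ((c t).factorial : ℝ)) (fun i _ => by positivity)]

theorem stmt12 (r : ℝ) (hr : 0 < r) (ℓ : ℕ) (hℓ : 1 ≤ ℓ)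
    (a : Fin ℓ → ℕ) (ha : StrictMono a) (b : ℕ) (hb : b ≤ ℓ) :
    Matrix.det (Matrix.of fun s t : Fin ℓ =>
        W r (a s) (if (t : ℕ) < b then (t : ℕ) else (t : ℕ) + 1))
      = Real.exp (-(ℓ:ℝ) * r^2 / 8) * (-1)^(∑ c, a c) *
          Real.sqrt ((Nat.factorial b : ℝ) / (Fl (ℓ+1) * FK a)) *
          (r / Real.sqrt 2) ^ ((∑ c, (a c : ℤ)) - ((ℓ:ℤ) * ((ℓ:ℤ)+1)) / 2 + (b:ℤ)) *
          CK a * Gam a b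
    ∧ Matrix.det (Matrix.of fun s t : Fin ℓ => W r (a s) (t : ℕ))
      = Real.exp (-(ℓ:ℝ) * r^2 / 8) * (-1)^(∑ c, a c) *
          Real.sqrt (1 / (Fl ℓ * FK a)) *
          (r / Real.sqrt 2) ^ ((∑ c, (a c : ℤ)) - ((ℓ:ℤ) * ((ℓ:ℤ)-1)) / 2) *
          CK a := by
  have hb' : b < ℓ + 1 := by omega
  have hx : (0:ℝ) < r / Real.sqrt 2 := div_pos hr (Real.sqrt_pos.2 (by norm_num))
  have hFK : (0:ℝ) < FK a :=
    Finset.prod_pos (fun i _ => by exact_mod_cast Nat.factorial_pos (a i))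
  have hE : Real.exp (-(ℓ:ℝ) * r^2 / 8) = Real.exp (-r^2/8)^ℓ := by
    rw [← Real.exp_nat_mul]; congr 1; ring
  have hSig : (∑ c, (a c : ℤ)) = ((∑ c, a c : ℕ) : ℤ) := by push_cast; rfl
  have hT2 : (∑ t : Fin ℓ, (t:ℕ)) * 2 = ℓ * (ℓ - 1) := by
    rw [Fin.sum_univ_eq_sum_range (fun i => i) ℓ]
    exact Finset.sum_range_id_mul_two ℓ
  have k2 : ((∑ t : Fin ℓ, (t:ℕ) : ℕ) : ℤ) * 2 = (ℓ:ℤ) * ((ℓ:ℤ) - 1) := by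
    zify [hℓ] at hT2
    exact_mod_cast hT2
  constructor
  · -- part 1
    have hc1 : ∀ t : Fin ℓ, (if (t:ℕ) < b then (t:ℕ) else (t:ℕ)+1)
        = (t:ℕ) + (if (t:ℕ) < b then 0 else 1) := by
      intro t; by_cases h : (t:ℕ) < b <;> simp [h]
    rw [detW r hr a (fun t => if (t:ℕ) < b then (t:ℕ) else (t:ℕ)+1), hrow r a,
      hcol r (fun t => if (t:ℕ) < b then (t:ℕ) else (t:ℕ)+1)]
    have hdet : Matrix.det (Matrix.of fun s t : Fin ℓ =>
        ((a s).descFactorial (if (t:ℕ) < b then (t:ℕ) else (t:ℕ)+1) : ℝ)) = CK a * Gam a b := by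
      have h := keyD a ⟨b, hb'⟩
      have heq : (Matrix.of fun s t : Fin ℓ =>
          ((a s).descFactorial (((⟨b,hb'⟩ : Fin (ℓ+1)).succAbove t : Fin (ℓ+1)) : ℕ) : ℝ))
          = (Matrix.of fun s t : Fin ℓ =>
          ((a s).descFactorial (if (t:ℕ) < b then (t:ℕ) else (t:ℕ)+1) : ℝ)) := by
        ext s t
        rw [Matrix.of_apply, Matrix.of_apply, succAbove_val]
      rw [heq] at h
      exact h
    rw [hdet]
    -- column sum fact
    have hTT : 2 * (∑ t : Fin ℓ, (if (t:ℕ) < b then (t:ℕ) else (t:ℕ)+1))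
        = (∑ t : Fin ℓ, (t:ℕ)) * 2 + 2 * (ℓ - b) := by
      rw [Finset.sum_congr rfl (fun t _ => hc1 t), Finset.sum_add_distrib]
      have e2 : (∑ t : Fin ℓ, (if (t:ℕ) < b then 0 else 1)) = ℓ - b := by
        rw [Fin.sum_univ_eq_sum_range (fun i => if i < b then 0 else 1) ℓ,
          Finset.range_eq_Ico, ← Finset.sum_Ico_consecutive _ (Nat.zero_le b) hb]
        rw [Finset.sum_eq_zero (fun i hi => by rw [if_pos (Finset.mem_Ico.1 hi).2]),
          Finset.sum_congr rfl
            (fun i hi => by rw [if_neg (by have := (Finset.mem_Ico.1 hi).1; omega)])]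
        rw [Finset.sum_const, Nat.card_Ico, smul_eq_mul, mul_one, zero_add]
      rw [e2]
      ring
    have he1 : ((∑ c, (a c : ℤ)) - ((ℓ:ℤ) * ((ℓ:ℤ)+1)) / 2 + (b:ℤ))
        = (((∑ c, a c : ℕ)) : ℤ)
          - (((∑ t : Fin ℓ, (if (t:ℕ) < b then (t:ℕ) else (t:ℕ)+1)) : ℕ) : ℤ) := by
      have k3 : (2:ℤ) * ((∑ t : Fin ℓ, (if (t:ℕ) < b then (t:ℕ) else (t:ℕ)+1) : ℕ) : ℤ)
          = ((∑ t : Fin ℓ, (t:ℕ) : ℕ) : ℤ) * 2 + 2 * ((ℓ:ℤ) - (b:ℤ)) := by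
        zify [hb] at hTT
        exact_mod_cast hTT
      have k1 : ((ℓ:ℤ) * ((ℓ:ℤ)+1)) = (ℓ:ℤ) * ((ℓ:ℤ)-1) + 2*(ℓ:ℤ) := by ring
      rw [hSig, k1]
      generalize hA : (ℓ:ℤ) * ((ℓ:ℤ)-1) = A at k2 ⊢
      omega
    have hQ1 : Fl (ℓ+1) = (b.factorial : ℝ)
        * ∏ t : Fin ℓ, (((if (t:ℕ) < b then (t:ℕ) else (t:ℕ)+1)).factorial : ℝ) := by
      rw [Fl, ← Fin.prod_univ_eq_prod_range (fun j => ((Nat.factorial j : ℕ) : ℝ)) (ℓ+1),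
        Fin.prod_univ_succAbove (fun j : Fin (ℓ+1) => (((j:ℕ)).factorial : ℝ)) ⟨b, hb'⟩]
      congr 1
      apply Finset.prod_congr rfl
      intro t _
      rw [succAbove_val]
    have hQpos : (0:ℝ) < ∏ t : Fin ℓ, (((if (t:ℕ) < b then (t:ℕ) else (t:ℕ)+1)).factorial : ℝ) :=
      Finset.prod_pos (fun i _ => by exact_mod_cast Nat.factorial_pos _)
    have hWv : ((b.factorial : ℝ)) / (Fl (ℓ+1) * FK a)
        = ((∏ t : Fin ℓ, (((if (t:ℕ) < b then (t:ℕ) else (t:ℕ)+1)).factorial : ℝ)) * FK a)⁻¹ := by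
      rw [hQ1]
      have hbf : ((b.factorial : ℝ)) ≠ 0 := by exact_mod_cast (Nat.factorial_pos b).ne'
      field_simp
    rw [assemble (r / Real.sqrt 2) hx _ _ _ he1 (FK a) _ _ hFK hQpos hWv
      (Real.exp (-r^2/8)^ℓ) ((-1:ℝ)^(∑ c, a c)) (CK a * Gam a b), hE]
    ring
  · -- part 2
    rw [detW r hr a (fun t => (t:ℕ)), hrow r a, hcol r (fun t => (t:ℕ))]
    have hdet : Matrix.det (Matrix.of fun s t : Fin ℓ => ((a s).descFactorial (t:ℕ) : ℝ))
        = CK a := by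
      have hvd := Matrix.det_eval_matrixOfPolynomials_eq_det_vandermonde
        (fun s : Fin ℓ => ((a s : ℕ) : ℝ)) (fun j => descPochhammer ℝ (j:ℕ))
        (fun i => descPochhammer_natDegree (R := ℝ) (i:ℕ))
        (fun i => monic_descPochhammer ℝ (i:ℕ))
      have heq : (Matrix.of fun i j : Fin ℓ =>
          Polynomial.eval ((a i : ℕ) : ℝ) (descPochhammer ℝ (j:ℕ)))
          = (Matrix.of fun s t : Fin ℓ => ((a s).descFactorial (t:ℕ) : ℝ)) := by
        ext s t
        rw [Matrix.of_apply, Matrix.of_apply, descPochhammer_eval_eq_descFactorial]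
      rw [heq] at hvd
      rw [← hvd, Matrix.det_vandermonde, vand_eq_CK]
    rw [hdet]
    have he2 : ((∑ c, (a c : ℤ)) - ((ℓ:ℤ) * ((ℓ:ℤ)-1)) / 2)
        = (((∑ c, a c : ℕ)) : ℤ) - (((∑ t : Fin ℓ, (t:ℕ)) : ℕ) : ℤ) := by
      rw [hSig]
      generalize hA : (ℓ:ℤ) * ((ℓ:ℤ)-1) = A at k2 ⊢
      omega
    have hQ2 : (∏ t : Fin ℓ, (((t:ℕ)).factorial : ℝ)) = Fl ℓ := by
      rw [Fl, Fin.prod_univ_eq_prod_range (fun j => ((Nat.factorial j : ℕ) : ℝ)) ℓ]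
    have hQpos : (0:ℝ) < ∏ t : Fin ℓ, (((t:ℕ)).factorial : ℝ) :=
      Finset.prod_pos (fun i _ => by exact_mod_cast Nat.factorial_pos _)
    have hWv : (1:ℝ) / (Fl ℓ * FK a)
        = ((∏ t : Fin ℓ, (((t:ℕ)).factorial : ℝ)) * FK a)⁻¹ := by
      rw [hQ2, one_div]
    rw [assemble (r / Real.sqrt 2) hx _ _ _ he2 (FK a) _ _ hFK hQpos hWv
      (Real.exp (-r^2/8)^ℓ) ((-1:ℝ)^(∑ c, a c)) (CK a), hE]
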